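/- Let G be a residually finite group, d a left-invariant pseudometric on G, and K a finite subset of G such that the restriction of d to K is a metric (distinct points of K are at positive distance). Then there exist a subgroup H ⊆ G of finite index and a G-invariant pseudometric λ on the finite set G/H of left cosets such that the restriction of the quotient map G → G/H to K is distance-preserving from (K, d) to (G/H, λ). -/

import Mathlib

/-- A group is residually finite: every nontrivial element survives in some
finite quotient, i.e. avoids some finite-index normal subgroup. -/
def IsResiduallyFinite (G : Type*) [Group G] : Prop :=
  ∀ g : G, g ≠ 1 → ∃ N : Subgroup G, N.Normal ∧ N.FiniteIndex ∧ g ∉ N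

/-- A left-invariant pseudometric on a group. -/
def IsLeftInvPseudometric {G : Type*} [Group G] (d : G → G → ℝ) : Prop :=
  (∀ x y, 0 ≤ d x y) ∧ (∀ x, d x x = 0) ∧ (∀ x y, d x y = d y x) ∧
    (∀ x y z, d x z ≤ d x y + d y z) ∧ (∀ g x y, d (g * x) (g * y) = d x y)

section Aux

variable {G : Type*} [Group G]

/-- Intersecting finitely many witnessing subgroups. -/
lemma exists_avoiding (hG : IsResiduallyFinite G) (T : Finset G) :
    ∃ N : Subgroup G, N.Normal ∧ N.FiniteIndex ∧ ∀ t ∈ T, t ∈ N → t = 1 := by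
  classical
  induction T using Finset.induction with
  | empty => exact ⟨⊤, inferInstance, inferInstance, by simp⟩
  | @insert a T ha ih =>
    obtain ⟨N, hNorm, hFin, hN⟩ := ih
    by_cases h1 : a = 1
    · refine ⟨N, hNorm, hFin, fun t ht htN => ?_⟩
      rcases Finset.mem_insert.mp ht with rfl | ht
      · exact h1
      · exact hN t ht htN
    · obtain ⟨Na, hNorma, hFina, haNa⟩ := hG a h1
      refine ⟨N ⊓ Na, ?_, ?_, ?_⟩
      · exact ⟨fun n hn g => ⟨hNorm.conj_mem n hn.1 g, hNorma.conj_mem n hn.2 g⟩⟩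
      · haveI := hFin; haveI := hFina; infer_instance
      · intro t ht htN
        rcases Finset.mem_insert.mp ht with rfl | ht
        · exact absurd htN.2 haNa
        · exact hN t ht htN.1

variable [DecidableEq G]

/-- Products of at most `k` elements of `S`. -/
def prodsAux (S : Finset G) : ℕ → Finset G
  | 0 => {1}
  | (k + 1) => prodsAux S k ∪ (S ×ˢ prodsAux S k).image fun p => p.1 * p.2

lemma one_mem_prodsAux (S : Finset G) : ∀ k, (1 : G) ∈ prodsAux S k
  | 0 => by simp [prodsAux]
  | (k + 1) => Finset.mem_union_left _ (one_mem_prodsAux S k)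

lemma prod_mem_prodsAux (S : Finset G) :
    ∀ (k : ℕ) (l : List G), (∀ s ∈ l, s ∈ S) → l.length ≤ k →
      l.prod ∈ prodsAux S k := by
  intro k
  induction k with
  | zero =>
    intro l hl hlen
    have : l = [] := List.length_eq_zero_iff.mp (Nat.le_zero.mp hlen)
    subst this
    simp [prodsAux]
  | succ k ih =>
    intro l hl hlen
    cases l with
    | nil => simpa using one_mem_prodsAux S (k + 1)
    | cons a l =>
      simp only [prodsAux, Finset.mem_union, List.prod_cons]
      refine Or.inr (Finset.mem_image.mpr ⟨(a, l.prod), ?_, rfl⟩)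
      refine Finset.mem_product.mpr ⟨hl a List.mem_cons_self, ?_⟩
      exact ih l (fun s hs => hl s (List.mem_cons_of_mem a hs))
        (Nat.le_of_succ_le_succ hlen)

variable {d : G → G → ℝ}

lemma d_one_prod_le (hd : IsLeftInvPseudometric d) :
    ∀ l : List G, d 1 l.prod ≤ (l.map (d 1)).sum
  | [] => by simp [hd.2.1]
  | a :: l => by
    obtain ⟨hpos, hrefl, hsymm, htri, hinv⟩ := hd
    have h1 : d 1 (a * l.prod) ≤ d 1 a + d a (a * l.prod) := htri _ _ _
    have h2 : d a (a * l.prod) = d 1 l.prod := by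
      have := hinv a 1 l.prod
      simpa using this
    simp only [List.prod_cons, List.map_cons, List.sum_cons]
    calc d 1 (a * l.prod) ≤ d 1 a + d a (a * l.prod) := h1
      _ = d 1 a + d 1 l.prod := by rw [h2]
      _ ≤ d 1 a + (l.map (d 1)).sum := by
          have := d_one_prod_le ⟨hpos, hrefl, hsymm, htri, hinv⟩ l
          linarith

lemma filter_prod_eq (p : G → Bool) :
    ∀ l : List G, (∀ a ∈ l, p a = false → a = 1) →
      (l.filter p).prod = l.prod
  | [] => by simp
  | a :: l => by
    intro h
    have ih := filter_prod_eq p l (fun b hb => h b (List.mem_cons_of_mem a hb))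
    by_cases hpa : p a
    · rw [List.filter_cons_of_pos hpa, List.prod_cons, List.prod_cons, ih]
    · have ha1 : a = 1 := h a List.mem_cons_self (Bool.eq_false_iff.mpr hpa)
      rw [List.filter_cons_of_neg (by simpa using hpa), List.prod_cons, ih, ha1, one_mul]

lemma filter_sum_le (f : G → ℝ) (p : G → Bool) :
    ∀ l : List G, (∀ a ∈ l, 0 ≤ f a) →
      ((l.filter p).map f).sum ≤ (l.map f).sum
  | [] => by simp
  | a :: l => by
    intro h
    have ih := filter_sum_le f p l (fun b hb => h b (List.mem_cons_of_mem a hb))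
    by_cases hpa : p a
    · rw [List.filter_cons_of_pos hpa]
      simpa using ih
    · rw [List.filter_cons_of_neg (by simpa using hpa)]
      simp only [List.map_cons, List.sum_cons]
      have := h a List.mem_cons_self
      linarith

lemma mul_length_le_sum (f : G → ℝ) (ε : ℝ) :
    ∀ l : List G, (∀ a ∈ l, ε ≤ f a) →
      ε * l.length ≤ (l.map f).sum
  | [] => by simp
  | a :: l => by
    intro h
    have ih := mul_length_le_sum f ε l (fun b hb => h b (List.mem_cons_of_mem a hb))
    have := h a List.mem_cons_self
    simp only [List.map_cons, List.sum_cons, List.length_cons]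
    push_cast
    nlinarith [ih]

end Aux

theorem exists_finiteIndex_invariant_pseudometric {G : Type*} [Group G]
    (hG : IsResiduallyFinite G) (d : G → G → ℝ) (hd : IsLeftInvPseudometric d)
    (K : Finset G) (hK : ∀ x ∈ K, ∀ y ∈ K, x ≠ y → 0 < d x y) :
    ∃ H : Subgroup G, H.FiniteIndex ∧
      ∃ lam : (G ⧸ H) → (G ⧸ H) → ℝ,
        (∀ x y, 0 ≤ lam x y) ∧ (∀ x, lam x x = 0) ∧ (∀ x y, lam x y = lam y x) ∧
        (∀ x y z, lam x z ≤ lam x y + lam y z) ∧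
        (∀ (g : G) (x y : G ⧸ H), lam (g • x) (g • y) = lam x y) ∧
        (∀ x ∈ K, ∀ y ∈ K, lam (x : G ⧸ H) (y : G ⧸ H) = d x y) := by
  classical
  obtain ⟨hpos, hrefl, hsymm, htri, hinv⟩ := hd
  -- d 1 (x⁻¹ * y) = d x y
  have hd1 : ∀ x y : G, d 1 (x⁻¹ * y) = d x y := by
    intro x y
    have := hinv x 1 (x⁻¹ * y)
    simpa using this.symm
  by_cases hKtriv : ∀ x ∈ K, ∀ y ∈ K, x = y
  · -- trivial case
    refine ⟨⊤, inferInstance, fun _ _ => 0, by simp, by simp, by simp, by simp, by simp, ?_⟩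
    intro x hx y hy
    have : x = y := hKtriv x hx y hy
    subst this
    simp [hrefl]
  -- main case
  push_neg at hKtriv
  obtain ⟨x₀, hx₀, y₀, hy₀, hxy₀⟩ := hKtriv
  set S : Finset G := (K ×ˢ K).image (fun p => p.1⁻¹ * p.2) with hS
  set S' : Finset G := S.filter (fun s => s ≠ 1) with hS'
  have hS'ne : S'.Nonempty := by
    refine ⟨x₀⁻¹ * y₀, Finset.mem_filter.mpr ⟨?_, ?_⟩⟩
    · exact Finset.mem_image.mpr ⟨(x₀, y₀), Finset.mem_product.mpr ⟨hx₀, hy₀⟩, rfl⟩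
    · simpa using fun h => hxy₀ (by rwa [inv_mul_eq_one] at h)
  set ε : ℝ := S'.inf' hS'ne (fun s => d 1 s) with hε
  have hεpos : 0 < ε := by
    rw [hε]
    apply Finset.lt_inf'_iff hS'ne (f := fun s => d 1 s) (a := 0) |>.mpr
    intro s hs
    rw [hS'] at hs
    obtain ⟨hsS, hs1⟩ := Finset.mem_filter.mp hs
    obtain ⟨⟨x, y⟩, hxy, rfl⟩ := Finset.mem_image.mp hsS
    obtain ⟨hx, hy⟩ := Finset.mem_product.mp hxy
    rw [hd1]
    refine hK x hx y hy ?_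
    intro h; subst h
    simp at hs1
  have hεle : ∀ s ∈ S, s ≠ 1 → ε ≤ d 1 s := by
    intro s hs hs1
    exact Finset.inf'_le _ (Finset.mem_filter.mpr ⟨hs, by simpa using hs1⟩)
  set M : ℝ := ∑ p ∈ K ×ˢ K, d p.1 p.2 with hM
  have hM0 : 0 ≤ M := Finset.sum_nonneg fun p _ => hpos _ _
  have hdleM : ∀ x ∈ K, ∀ y ∈ K, d x y ≤ M := by
    intro x hx y hy
    exact Finset.single_le_sum (f := fun p : G × G => d p.1 p.2)
      (fun p _ => hpos _ _) (show (x, y) ∈ K ×ˢ K from Finset.mem_product.mpr ⟨hx, hy⟩)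
  set n₀ : ℕ := ⌈M / ε⌉₊ with hn₀
  set T : Finset G := (S ×ˢ prodsAux S n₀).image (fun p => p.1⁻¹ * p.2) with hT
  obtain ⟨N, hNorm, hFin, hNsep⟩ := exists_avoiding hG T
  haveI : N.Normal := hNorm
  haveI : N.FiniteIndex := hFin
  refine ⟨N, hFin, ?_⟩
  -- chains
  set C : (G ⧸ N) → Set ℝ := fun q =>
    insert M { r | ∃ m : List G, (∀ s ∈ m, s ∈ S) ∧
      ((m.prod : G) : G ⧸ N) = q ∧ r = (m.map (d 1)).sum } with hC
  have hCne : ∀ q, (C q).Nonempty := fun q => ⟨M, Set.mem_insert _ _⟩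
  have hCnonneg : ∀ q, ∀ r ∈ C q, 0 ≤ r := by
    intro q r hr
    rcases hr with rfl | ⟨m, _, _, rfl⟩
    · exact hM0
    · apply List.sum_nonneg
      intro a ha
      obtain ⟨s, _, rfl⟩ := List.mem_map.mp ha
      exact hpos _ _
  have hCbdd : ∀ q, BddBelow (C q) := fun q => ⟨0, fun r hr => hCnonneg q r hr⟩
  set f : (G ⧸ N) → ℝ := fun q => sInf (C q) with hf
  have hfnonneg : ∀ q, 0 ≤ f q := fun q => le_csInf (hCne q) (hCnonneg q)
  have hfleM : ∀ q, f q ≤ M := fun q => csInf_le (hCbdd q) (Set.mem_insert _ _)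
  have hfone : f 1 = 0 := by
    apply le_antisymm _ (hfnonneg 1)
    apply csInf_le (hCbdd 1)
    exact Set.mem_insert_iff.mpr (Or.inr ⟨[], by simp, by simp, by simp⟩)
  have hfinv : ∀ q, f q⁻¹ ≤ f q := by
    intro q
    apply le_csInf (hCne q)
    intro r hr
    rcases hr with rfl | ⟨m, hm, hq, rfl⟩
    · exact hfleM _
    · apply csInf_le (hCbdd _)
      refine Set.mem_insert_iff.mpr (Or.inr ⟨(m.map (fun s => s⁻¹)).reverse, ?_, ?_, ?_⟩)
      · intro s hs
        rw [List.mem_reverse, List.mem_map] at hs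
        obtain ⟨t, ht, rfl⟩ := hs
        obtain ⟨⟨x, y⟩, hxy, rfl⟩ := Finset.mem_image.mp (hm t ht)
        obtain ⟨hx, hy⟩ := Finset.mem_product.mp hxy
        refine Finset.mem_image.mpr ⟨(y, x), Finset.mem_product.mpr ⟨hy, hx⟩, by simp⟩
      · rw [← List.prod_inv_reverse, ← hq]
        simp
      · rw [List.map_reverse, List.sum_reverse, List.map_map]
        congr 1
        apply List.map_congr_left
        intro s hs
        simp only [Function.comp_apply]
        rw [hsymm]
        have := hinv s 1 s⁻¹
        simpa using this
  have hfsymm : ∀ q, f q⁻¹ = f q := by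
    intro q
    refine le_antisymm (hfinv q) ?_
    have := hfinv q⁻¹
    simpa using this
  have hftri : ∀ q₁ q₂ : G ⧸ N, f (q₁ * q₂) ≤ f q₁ + f q₂ := by
    intro q₁ q₂
    have key : ∀ a ∈ C q₁, ∀ b ∈ C q₂, f (q₁ * q₂) ≤ a + b := by
      intro a ha b hb
      rcases ha with rfl | ⟨m₁, hm₁, hq₁, rfl⟩
      · have := hCnonneg q₂ b hb
        have := hfleM (q₁ * q₂)
        linarith
      rcases hb with rfl | ⟨m₂, hm₂, hq₂, rfl⟩
      · have : 0 ≤ (m₁.map (d 1)).sum := by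
          apply List.sum_nonneg
          intro r hr
          obtain ⟨s, _, rfl⟩ := List.mem_map.mp hr
          exact hpos _ _
        have := hfleM (q₁ * q₂)
        linarith
      apply csInf_le (hCbdd _)
      refine Set.mem_insert_iff.mpr (Or.inr ⟨m₁ ++ m₂, ?_, ?_, ?_⟩)
      · intro s hs
        rcases List.mem_append.mp hs with h | h
        · exact hm₁ s h
        · exact hm₂ s h
      · rw [List.prod_append, ← hq₁, ← hq₂]
        simp
      · rw [List.map_append, List.sum_append]
    rw [← sub_le_iff_le_add]
    apply le_csInf (hCne q₁)
    intro a ha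
    rw [sub_le_iff_le_add, add_comm, ← sub_le_iff_le_add]
    apply le_csInf (hCne q₂)
    intro b hb
    rw [sub_le_iff_le_add]
    linarith [key a ha b hb]
  -- key equality on K
  have hfK : ∀ x ∈ K, ∀ y ∈ K, f ((x⁻¹ * y : G) : G ⧸ N) = d x y := by
    intro x hx y hy
    apply le_antisymm
    · apply csInf_le (hCbdd _)
      refine Set.mem_insert_iff.mpr (Or.inr ⟨[x⁻¹ * y], ?_, by simp, by simp [hd1]⟩)
      intro s hs
      rw [List.mem_singleton] at hs
      subst hs
      exact Finset.mem_image.mpr ⟨(x, y), Finset.mem_product.mpr ⟨hx, hy⟩, rfl⟩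
    · apply le_csInf (hCne _)
      intro r hr
      rcases hr with rfl | ⟨m, hm, hq, rfl⟩
      · exact hdleM x hx y hy
      rcases le_or_gt M ((m.map (d 1)).sum) with hMr | hrM
      · exact le_trans (hdleM x hx y hy) hMr
      -- small chain: use separation
      set m' : List G := m.filter (fun s => s ≠ 1) with hm'
      have hm'mem : ∀ s ∈ m', s ∈ S := fun s hs => hm s (List.mem_of_mem_filter hs)
      have hm'prod : m'.prod = m.prod := by
        apply filter_prod_eq
        intro a _ hfa
        simpa using hfa
      have hm'sum : (m'.map (d 1)).sum ≤ (m.map (d 1)).sum := by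
        apply filter_sum_le
        intro a _
        exact hpos _ _
      have hm'len : ε * m'.length ≤ (m'.map (d 1)).sum := by
        apply mul_length_le_sum
        intro a ha
        have haS := hm'mem a ha
        have ha1 : a ≠ 1 := by
          have := List.of_mem_filter ha
          simpa using this
        exact hεle a haS ha1
      have hlen : m'.length ≤ n₀ := by
        by_contra hcon
        push_neg at hcon
        have h1 : M / ε ≤ (n₀ : ℝ) := Nat.le_ceil _
        have h2 : M ≤ ε * n₀ := by
          rw [div_le_iff₀ hεpos] at h1
          linarith [h1]
        have h3 : (n₀ : ℝ) < m'.length := by exact_mod_cast hcon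
        have : ε * (n₀ : ℝ) < ε * m'.length := by
          apply mul_lt_mul_of_pos_left h3 hεpos
        linarith
      -- separation
      have htmem : (x⁻¹ * y)⁻¹ * m'.prod ∈ T := by
        refine Finset.mem_image.mpr ⟨(x⁻¹ * y, m'.prod), Finset.mem_product.mpr ⟨?_, ?_⟩, rfl⟩
        · exact Finset.mem_image.mpr ⟨(x, y), Finset.mem_product.mpr ⟨hx, hy⟩, rfl⟩
        · exact prod_mem_prodsAux S n₀ m' hm'mem hlen
      have htN : (x⁻¹ * y)⁻¹ * m'.prod ∈ N := by
        rw [hm'prod]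
        exact QuotientGroup.eq.mp hq.symm
      have ht1 := hNsep _ htmem htN
      have hprodeq : m'.prod = x⁻¹ * y := by
        rw [← inv_mul_eq_one] at ht1 ⊢
        simpa using ht1
      calc d x y = d 1 (x⁻¹ * y) := (hd1 x y).symm
        _ = d 1 m'.prod := by rw [hprodeq]
        _ ≤ (m'.map (d 1)).sum := d_one_prod_le ⟨hpos, hrefl, hsymm, htri, hinv⟩ m'
        _ ≤ (m.map (d 1)).sum := hm'sum
  -- define lam
  refine ⟨fun a b => f (a⁻¹ * b), ?_, ?_, ?_, ?_, ?_, ?_⟩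
  · intro a b; exact hfnonneg _
  · intro a
    show f (a⁻¹ * a) = 0
    simpa using hfone
  · intro a b
    show f (a⁻¹ * b) = f (b⁻¹ * a)
    have h2 : (a⁻¹ * b)⁻¹ = b⁻¹ * a := by group
    rw [← hfsymm (a⁻¹ * b), h2]
  · intro a b c
    show f (a⁻¹ * c) ≤ f (a⁻¹ * b) + f (b⁻¹ * c)
    have h2 : a⁻¹ * c = (a⁻¹ * b) * (b⁻¹ * c) := by group
    rw [h2]
    exact hftri _ _
  · intro g a b
    induction a using QuotientGroup.induction_on with
    | H a =>
    induction b using QuotientGroup.induction_on with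
    | H b =>
    show f ((g • (a : G ⧸ N))⁻¹ * (g • (b : G ⧸ N))) = f (((a : G ⧸ N))⁻¹ * (b : G ⧸ N))
    rw [MulAction.Quotient.smul_mk, MulAction.Quotient.smul_mk]
    congr 1
    show ((g • a : G) : G ⧸ N)⁻¹ * ((g • b : G) : G ⧸ N) = _
    rw [← QuotientGroup.mk_inv, ← QuotientGroup.mk_mul, ← QuotientGroup.mk_inv,
      ← QuotientGroup.mk_mul]
    congr 1
    show (g * a)⁻¹ * (g * b) = a⁻¹ * b
    group
  · intro x hx y hy
    show f (((x : G ⧸ N))⁻¹ * (y : G ⧸ N)) = d x y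
    have h2 : ((x : G ⧸ N))⁻¹ * (y : G ⧸ N) = ((x⁻¹ * y : G) : G ⧸ N) := by
      rw [← QuotientGroup.mk_inv, ← QuotientGroup.mk_mul]
    rw [h2]
    exact hfK x hx y hy
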